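/- Let N ≥ 1 and d ≥ 1. Let f_i : ℝ^d → ℝ for i = 1,…,N be twice continuously differentiable functions and y_1,…,y_N ∈ ℝ. Define the mean-squared-error loss L : ℝ^d → ℝ by L(w) = (1/(2N)) Σ_{i=1}^N (f_i(w) − y_i)². Fix w ∈ ℝ^d, λ > 0, and M > 0 such that for every unit vector X ∈ ℝ^d: (1/N) Σ_{i=1}^N (Df_i(w)[X])² ≥ λ and |D²f_i(w)[X, X]| ≤ M for all i. If max_{1 ≤ i ≤ N} |f_i(w) − y_i| < λ / M, then for every unit vector X the second derivative at t = 0 of t ↦ L(w + tX) is strictly positive. -/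

import Mathlib

/-- Small residuals preserve positivity of the directional second derivative of
the MSE loss: if along every unit direction `X` the Gram quadratic form of the
first directional derivatives is at least `λ` and every second directional
derivative is bounded by `M` in absolute value, and all residuals satisfy
`|f_i w − y_i| < λ / M`, then the second derivative at `t = 0` of
`t ↦ L (w + t X)` is strictly positive for every unit direction `X`. -/
theorem mse_second_derivative_pos_of_small_residuals (N d : ℕ) (hN : 1 ≤ N) (hd : 1 ≤ d)
    (f : Fin N → EuclideanSpace ℝ (Fin d) → ℝ)
    (hf : ∀ i, ContDiff ℝ 2 (f i))
    (y : Fin N → ℝ) (w : EuclideanSpace ℝ (Fin d))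
    (lam M : ℝ) (hlam : 0 < lam) (hM : 0 < M)
    (hgram : ∀ X : EuclideanSpace ℝ (Fin d), ‖X‖ = 1 →
      lam ≤ (1 / (N : ℝ)) * ∑ i, (deriv (fun t : ℝ => f i (w + t • X)) 0) ^ 2)
    (hsecond : ∀ X : EuclideanSpace ℝ (Fin d), ‖X‖ = 1 →
      ∀ i, |deriv (deriv (fun t : ℝ => f i (w + t • X))) 0| ≤ M)
    (hres : ∀ i, |f i w - y i| < lam / M) :
    ∀ X : EuclideanSpace ℝ (Fin d), ‖X‖ = 1 →
      0 < deriv (deriv (fun t : ℝ =>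
        (1 / (2 * (N : ℝ))) * ∑ i, (f i (w + t • X) - y i) ^ 2)) 0 := by
  intro X hX
  set g : Fin N → ℝ → ℝ := fun i t => f i (w + t • X) with hg
  have hgC : ∀ i, ContDiff ℝ 2 (g i) := fun i =>
    (hf i).comp (contDiff_const.add (contDiff_id.smul contDiff_const))
  have hgd : ∀ i, Differentiable ℝ (g i) := fun i => (hgC i).differentiable (by norm_num)
  have hgd2 : ∀ i, Differentiable ℝ (deriv (g i)) := by
    intro i
    have h1 : ContDiff ℝ 1 (deriv (g i)) :=
      ((contDiff_succ_iff_deriv (n := 1)).mp (by exact_mod_cast hgC i)).2.2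
    exact h1.differentiable one_ne_zero
  set a : Fin N → ℝ := fun i => (deriv (g i) 0) ^ 2 with ha
  set b : Fin N → ℝ := fun i => (g i 0 - y i) * deriv (deriv (g i)) 0 with hb
  -- first derivative
  have hderiv : deriv (fun t : ℝ =>
      (1 / (2 * (N : ℝ))) * ∑ i, (g i t - y i) ^ 2)
      = fun t => (1 / (2 * (N : ℝ))) * ∑ i, (2 * (g i t - y i) * deriv (g i) t) := by
    funext t
    have H : HasDerivAt (fun t : ℝ => (1 / (2 * (N : ℝ))) * ∑ i, (g i t - y i) ^ 2)
        ((1 / (2 * (N : ℝ))) * ∑ i, (2 * (g i t - y i) * deriv (g i) t)) t := by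
      refine HasDerivAt.const_mul _ ?_
      refine HasDerivAt.fun_sum fun i _ => ?_
      have h1 : HasDerivAt (fun t => g i t - y i) (deriv (g i) t) t :=
        ((hgd i t).hasDerivAt).sub_const _
      simpa [mul_comm, mul_assoc, mul_left_comm] using h1.fun_pow 2
    exact H.deriv
  rw [show (fun t : ℝ => (1 / (2 * (N : ℝ))) * ∑ i, (f i (w + t • X) - y i) ^ 2)
      = (fun t : ℝ => (1 / (2 * (N : ℝ))) * ∑ i, (g i t - y i) ^ 2) from rfl, hderiv]
  -- second derivative
  have H2 : HasDerivAt (fun t => (1 / (2 * (N : ℝ))) * ∑ i, (2 * (g i t - y i) * deriv (g i) t))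
      ((1 / (2 * (N : ℝ))) * ∑ i, (2 * (a i + b i))) 0 := by
    refine HasDerivAt.const_mul _ ?_
    refine HasDerivAt.fun_sum fun i _ => ?_
    have h1 : HasDerivAt (fun t => g i t - y i) (deriv (g i) 0) 0 :=
      ((hgd i 0).hasDerivAt).sub_const _
    have h2 : HasDerivAt (deriv (g i)) (deriv (deriv (g i)) 0) 0 := (hgd2 i 0).hasDerivAt
    have hval : 2 * (a i + b i) = 2 * (deriv (g i) 0 * deriv (g i) 0
        + (g i 0 - y i) * deriv (deriv (g i)) 0) := by
      simp only [ha, hb]; ring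
    rw [hval]
    simpa [mul_assoc] using (h1.mul h2).const_mul (2 : ℝ)
  rw [H2.deriv]
  have hNpos : (0 : ℝ) < N := by exact_mod_cast hN
  have key : (1 / (2 * (N : ℝ))) * ∑ i, (2 * (a i + b i))
      = (1 / (N : ℝ)) * ∑ i, a i + (1 / (N : ℝ)) * ∑ i, b i := by
    have hs : ∑ i, (2 * (a i + b i)) = 2 * ((∑ i, a i) + ∑ i, b i) := by
      rw [← Finset.sum_add_distrib, Finset.mul_sum]
    rw [hs]
    field_simp
  rw [key]
  have hA : lam ≤ (1 / (N : ℝ)) * ∑ i, a i := hgram X hX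
  have hBi : ∀ i, |b i| < lam := by
    intro i
    have h0 : g i 0 = f i w := by simp [hg]
    have h1 : |b i| ≤ |f i w - y i| * M := by
      rw [hb]
      simp only [h0]
      rw [abs_mul]
      exact mul_le_mul_of_nonneg_left (hsecond X hX i) (abs_nonneg _)
    have h2 : |f i w - y i| * M < lam := by
      have := hres i
      calc |f i w - y i| * M < (lam / M) * M :=
            mul_lt_mul_of_pos_right this hM
        _ = lam := by field_simp
    linarith
  have hB : |(1 / (N : ℝ)) * ∑ i, b i| < lam := by
    have hsum : |∑ i, b i| < N * lam := by
      calc |∑ i, b i| ≤ ∑ i, |b i| := Finset.abs_sum_le_sum_abs _ _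
        _ < ∑ _i : Fin N, lam := by
            refine Finset.sum_lt_sum_of_nonempty ?_ fun i _ => hBi i
            exact Finset.univ_nonempty_iff.mpr ⟨⟨0, hN⟩⟩
        _ = N * lam := by simp [Finset.sum_const, nsmul_eq_mul]
    rw [abs_mul, abs_of_pos (by positivity : (0:ℝ) < 1 / (N:ℝ))]
    rw [div_mul_eq_mul_div, one_mul, div_lt_iff₀ hNpos]
    linarith [hsum]
  have := abs_lt.mp hB
  linarith [this.1]
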